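/- Let P ⊆ ℝ² be a finite set and q ∈ ℝ². Then q ∈ convexHull(P) + D if and only if there exist points a, b ∈ P such that q ∈ convexHull({a, b}) + D. (A query point lies on or below the upper convex hull of P exactly when it lies on or below some chord of P; this underlies answering point-location queries using only the bridges stored in a CH-Tree.) -/

import Mathlib

open Pointwise

/-- The downward vertical cone in the plane. -/
def downCone : Set (ℝ × ℝ) := {d : ℝ × ℝ | d.1 = 0 ∧ d.2 ≤ 0}

private lemma hull_halfspace (P : Set (ℝ × ℝ)) (α β γ : ℝ)
    (h : ∀ p ∈ P, α * p.1 + β * p.2 ≤ γ) :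
    ∀ x ∈ convexHull ℝ P, α * x.1 + β * x.2 ≤ γ := by
  intro x hx
  have hsub : convexHull ℝ P ⊆ {y : ℝ × ℝ | α * y.1 + β * y.2 ≤ γ} := by
    refine convexHull_min h ?_
    intro y hy z hz a b ha hb hab
    simp only [Set.mem_setOf_eq] at hy hz ⊢
    simp only [Prod.fst_add, Prod.snd_add, Prod.smul_fst, Prod.smul_snd, smul_eq_mul]
    have h1 : a * (α * y.1 + β * y.2) ≤ a * γ := mul_le_mul_of_nonneg_left hy ha
    have h2 : b * (α * z.1 + β * z.2) ≤ b * γ := mul_le_mul_of_nonneg_left hz hb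
    have h3 : a * γ + b * γ = γ := by linear_combination γ * hab
    have h4 : α * (a * y.1 + b * z.1) + β * (a * y.2 + b * z.2)
        = a * (α * y.1 + β * y.2) + b * (α * z.1 + β * z.2) := by ring
    linarith
  exact hsub hx

private lemma hull_affine (P : Set (ℝ × ℝ)) (m V c : ℝ)
    (h : ∀ p ∈ P, p.2 ≤ V + m * (p.1 - c)) :
    ∀ x ∈ convexHull ℝ P, x.2 ≤ V + m * (x.1 - c) := by
  intro x hx
  have h' : ∀ p ∈ P, (-m) * p.1 + 1 * p.2 ≤ V - m * c := by
    intro p hp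
    have := h p hp
    nlinarith [this]
  have := hull_halfspace P (-m) 1 (V - m * c) h' x hx
  nlinarith [this]

/-- A query point lies on or below the upper convex hull of a finite set `P` exactly
when it lies on or below some chord of `P`. -/
theorem mem_upperHull_iff_below_chord (P : Set (ℝ × ℝ)) (hP : P.Finite) (q : ℝ × ℝ) :
    q ∈ convexHull ℝ P + downCone ↔
      ∃ a ∈ P, ∃ b ∈ P, q ∈ convexHull ℝ ({a, b} : Set (ℝ × ℝ)) + downCone := by
  constructor
  · intro h
    obtain ⟨x, hx, d, hd, rfl⟩ := Set.mem_add.1 h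
    obtain ⟨hd1, hd2⟩ := hd
    set c := x.1 with hc
    set F := hP.toFinset with hF
    have hPne : P.Nonempty := by
      rcases Set.eq_empty_or_nonempty P with h0 | h0
      · rw [h0] at hx; simp at hx
      · exact h0
    have hFne : F.Nonempty := by simpa [hF] using hPne
    obtain ⟨a0, ha0F, ha0min⟩ := F.exists_min_image Prod.fst hFne
    obtain ⟨b0, hb0F, hb0max⟩ := F.exists_max_image Prod.fst hFne
    have hlo : a0.1 ≤ c := by
      have := hull_halfspace P (-1) 0 (-a0.1) (fun p hp => by
        have := ha0min p (by simpa [hF] using hp); linarith) x hx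
      simp only [hc]; linarith
    have hhi : c ≤ b0.1 := by
      have := hull_halfspace P 1 0 b0.1 (fun p hp => by
        have := hb0max p (by simpa [hF] using hp); linarith) x hx
      simp only [hc]; linarith
    set v : (ℝ × ℝ) × (ℝ × ℝ) → ℝ := fun pq =>
      if pq.1.1 = pq.2.1 then max pq.1.2 pq.2.2
      else ((pq.2.1 - c) * pq.1.2 + (c - pq.1.1) * pq.2.2) / (pq.2.1 - pq.1.1) with hv
    set S : Finset ((ℝ × ℝ) × (ℝ × ℝ)) :=
      (F ×ˢ F).filter (fun pq => pq.1.1 ≤ c ∧ c ≤ pq.2.1) with hS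
    have hSne : S.Nonempty := ⟨(a0, b0), by
      simp only [hS, Finset.mem_filter, Finset.mem_product]
      exact ⟨⟨ha0F, hb0F⟩, hlo, hhi⟩⟩
    obtain ⟨ab, habS, habmax⟩ := S.exists_max_image v hSne
    set V := v ab with hV
    have habS' := habS
    simp only [hS, Finset.mem_filter, Finset.mem_product] at habS'
    obtain ⟨⟨haF, hbF⟩, hac, hcb⟩ := habS'
    -- fact 1 : points at abscissa c are below V
    have fact1 : ∀ p ∈ F, p.1 = c → p.2 ≤ V := by
      intro p hpF hpc
      have hmem : (p, p) ∈ S := by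
        simp only [hS, Finset.mem_filter, Finset.mem_product]
        exact ⟨⟨hpF, hpF⟩, hpc.le, hpc.ge⟩
      have := habmax (p, p) hmem
      simpa [hv] using this
    -- fact 2 : chords spanning c are below V at c
    have fact2 : ∀ p ∈ F, ∀ r ∈ F, p.1 < c → c < r.1 →
        (r.1 - c) * p.2 + (c - p.1) * r.2 ≤ (r.1 - p.1) * V := by
      intro p hpF r hrF hpc hcr
      have hmem : (p, r) ∈ S := by
        simp only [hS, Finset.mem_filter, Finset.mem_product]
        exact ⟨⟨hpF, hrF⟩, hpc.le, hcr.le⟩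
      have hle := habmax (p, r) hmem
      have hne : p.1 ≠ r.1 := by intro h'; rw [h'] at hpc; linarith
      rw [hv] at hle
      simp only [if_neg hne] at hle
      have hpos : (0 : ℝ) < r.1 - p.1 := by linarith
      have := (div_le_iff₀ hpos).1 hle
      linarith
    -- a slope m such that all points of P lie below the line through (c, V) of slope m
    have hmex : ∃ m : ℝ, ∀ p ∈ F, p.2 ≤ V + m * (p.1 - c) := by
      by_cases hR : ∃ p ∈ F, c < p.1
      · obtain ⟨p1, hp1F, hp1⟩ := hR
        obtain ⟨r, hrF, hrmax⟩ := (F.filter (fun p => c < p.1)).exists_max_image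
          (fun p => (p.2 - V) / (p.1 - c)) ⟨p1, Finset.mem_filter.2 ⟨hp1F, hp1⟩⟩
        have hrF' : r ∈ F := (Finset.mem_filter.1 hrF).1
        have hrc : c < r.1 := by
          have := (Finset.mem_filter.1 hrF).2; simpa using this
        set k := (r.2 - V) / (r.1 - c) with hk
        have hrpos : (0 : ℝ) < r.1 - c := by linarith
        have hkr : k * (r.1 - c) = r.2 - V := div_mul_cancel₀ _ hrpos.ne'
        refine ⟨k, ?_⟩
        intro p hpF
        rcases lt_trichotomy p.1 c with h' | h' | h'
        · have h2 := fact2 p hpF r hrF' h' hrc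
          have key : (r.1 - c) * (p.2 - V - k * (p.1 - c))
              = ((r.1 - c) * p.2 + (c - p.1) * r.2) - (r.1 - p.1) * V := by
            linear_combination (c - p.1) * hkr
          nlinarith [key, h2, hrpos]
        · have := fact1 p hpF h'
          rw [h']
          simpa using this
        · have hpc : (0 : ℝ) < p.1 - c := by linarith
          have hle := hrmax p (Finset.mem_filter.2 ⟨hpF, h'⟩)
          have := (div_le_iff₀ hpc).1 hle
          linarith
      · by_cases hL : ∃ p ∈ F, p.1 < c
        · obtain ⟨p1, hp1F, hp1⟩ := hL
          obtain ⟨l, hlF, hlmin⟩ := (F.filter (fun p => p.1 < c)).exists_min_image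
            (fun p => (V - p.2) / (c - p.1)) ⟨p1, Finset.mem_filter.2 ⟨hp1F, hp1⟩⟩
          set m := (V - l.2) / (c - l.1) with hmdef
          refine ⟨m, ?_⟩
          intro p hpF
          rcases lt_trichotomy p.1 c with h' | h' | h'
          · have hpc : (0 : ℝ) < c - p.1 := by linarith
            have hle := hlmin p (Finset.mem_filter.2 ⟨hpF, h'⟩)
            have h2 := (le_div_iff₀ hpc).1 hle
            have h3 : m * (p.1 - c) = -(m * (c - p.1)) := by ring
            linarith
          · have := fact1 p hpF h'
            rw [h']
            simpa using this
          · exact absurd ⟨p, hpF, h'⟩ hR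
        · refine ⟨0, ?_⟩
          intro p hpF
          push_neg at hR hL
          have h1 := hR p hpF
          have h2 := hL p hpF
          have h3 : p.1 = c := le_antisymm h1 h2
          have := fact1 p hpF h3
          simpa [h3] using this
    obtain ⟨m, hm⟩ := hmex
    have hxV : x.2 ≤ V := by
      have := hull_affine P m V c (fun p hp => hm p (by simpa [hF] using hp)) x hx
      simpa [hc] using this
    -- now produce the chord
    refine ⟨ab.1, by simpa [hF] using haF, ab.2, by simpa [hF] using hbF, ?_⟩
    by_cases hdeg : ab.1.1 = ab.2.1
    · have hc1 : ab.1.1 = c := le_antisymm hac (hdeg ▸ hcb)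
      have hVmax : V = max ab.1.2 ab.2.2 := by rw [hV, hv]; simp [hdeg]
      rcases le_total ab.1.2 ab.2.2 with h' | h'
      · refine Set.mem_add.2 ⟨ab.2, subset_convexHull ℝ _ (by simp), (x + d) - ab.2,
          ⟨?_, ?_⟩, by abel⟩
        · simp only [Prod.fst_sub, Prod.fst_add]
          rw [hd1, ← hdeg, hc1]; ring
        · simp only [Prod.snd_sub, Prod.snd_add]
          have : V = ab.2.2 := by rw [hVmax]; exact max_eq_right h'
          linarith
      · refine Set.mem_add.2 ⟨ab.1, subset_convexHull ℝ _ (by simp), (x + d) - ab.1,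
          ⟨?_, ?_⟩, by abel⟩
        · simp only [Prod.fst_sub, Prod.fst_add]
          rw [hd1, hc1]; ring
        · simp only [Prod.snd_sub, Prod.snd_add]
          have : V = ab.1.2 := by rw [hVmax]; exact max_eq_left h'
          linarith
    · have hlt : ab.1.1 < ab.2.1 := lt_of_le_of_ne (le_trans hac hcb) hdeg
      have hden : (0 : ℝ) < ab.2.1 - ab.1.1 := by linarith
      set t := (ab.2.1 - c) / (ab.2.1 - ab.1.1) with ht
      have ht0 : 0 ≤ t := div_nonneg (by linarith) hden.le
      have ht1 : t ≤ 1 := (div_le_one hden).2 (by linarith)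
      have htmul : t * (ab.2.1 - ab.1.1) = ab.2.1 - c := div_mul_cancel₀ _ hden.ne'
      set z := t • ab.1 + (1 - t) • ab.2 with hz
      have hzmem : z ∈ convexHull ℝ ({ab.1, ab.2} : Set (ℝ × ℝ)) := by
        rw [convexHull_pair]
        exact ⟨t, 1 - t, ht0, by linarith, by ring, rfl⟩
      have hz1 : z.1 = c := by
        simp only [hz, Prod.fst_add, Prod.smul_fst, smul_eq_mul]
        linear_combination -htmul
      have hz2 : z.2 = V := by
        simp only [hz, Prod.snd_add, Prod.smul_snd, smul_eq_mul]
        rw [hV, hv]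
        simp only [if_neg hdeg]
        rw [ht]
        field_simp
        ring
      refine Set.mem_add.2 ⟨z, hzmem, (x + d) - z, ⟨?_, ?_⟩, by abel⟩
      · simp only [Prod.fst_sub, Prod.fst_add]
        rw [hd1, hz1]; ring
      · simp only [Prod.snd_sub, Prod.snd_add]
        rw [hz2]; linarith
  · rintro ⟨a, ha, b, hb, hq⟩
    obtain ⟨z, hz, d, hd, rfl⟩ := Set.mem_add.1 hq
    exact Set.mem_add.2 ⟨z, convexHull_mono
      (Set.insert_subset_iff.2 ⟨ha, Set.singleton_subset_iff.2 hb⟩) hz, d, hd, rfl⟩
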